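/- For any policy π in a finite-horizon tabular MDP with rewards in [0,1], the variance of the Monte Carlo return is at least the semiparametric efficiency term: Var_π[Σ_{t=1}^H r_t] ≥ Σ_{t=1}^H E_π[ Var[ V^π_{t+1}(s_{t+1}) + r_t | s_t, a_t ] ]. -/

import Mathlib

open Finset MeasureTheory

section MDPDefs

variable {S A : Type} [Fintype S] [Fintype A]

/-- `π` is a (time-inhomogeneous, Markov) policy: `π t s a = π_t(a|s)`. -/
def IsPolicy (π : ℕ → S → A → ℝ) : Prop :=
  (∀ t s a, 0 ≤ π t s a) ∧ ∀ t s, ∑ a : A, π t s a = 1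

/-- `P` is a transition kernel: `P t s a s' = P_t(s'|s,a)`. -/
def IsKernel (P : ℕ → S → A → S → ℝ) : Prop :=
  (∀ t s a s', 0 ≤ P t s a s') ∧ ∀ t s a, ∑ s' : S, P t s a s' = 1

/-- `d` is a probability distribution on states. -/
def IsDist (d : S → ℝ) : Prop := (∀ s, 0 ≤ d s) ∧ ∑ s : S, d s = 1

/-- Value function `V^π_t` (time `t` is 0-indexed, horizon `H`, `V^π_t = 0` for `t ≥ H`):
`V^π_t(s) = Σ_a π_t(a|s) (r_t(s,a) + Σ_{s'} P_t(s'|s,a) V^π_{t+1}(s'))`. -/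
noncomputable def valueV (H : ℕ) (P : ℕ → S → A → S → ℝ) (r : ℕ → S → A → ℝ)
    (π : ℕ → S → A → ℝ) (t : ℕ) : S → ℝ :=
  if _h : t < H then
    fun s => ∑ a : A, π t s a * (r t s a + ∑ s' : S, P t s a s' * valueV H P r π (t + 1) s')
  else fun _ => 0
termination_by H - t
decreasing_by omega

/-- Q function `Q^π_t(s,a) = r_t(s,a) + Σ_{s'} P_t(s'|s,a) V^π_{t+1}(s')`. -/
noncomputable def qval (H : ℕ) (P : ℕ → S → A → S → ℝ) (r : ℕ → S → A → ℝ)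
    (π : ℕ → S → A → ℝ) (t : ℕ) (s : S) (a : A) : ℝ :=
  r t s a + ∑ s' : S, P t s a s' * valueV H P r π (t + 1) s'

/-- The value of a policy: `v^π = Σ_s d₁(s) V^π_1(s)`. -/
noncomputable def vval (H : ℕ) (P : ℕ → S → A → S → ℝ) (r : ℕ → S → A → ℝ)
    (π : ℕ → S → A → ℝ) (d1 : S → ℝ) : ℝ :=
  ∑ s : S, d1 s * valueV H P r π 0 s

/-- Marginal state occupancy `d^π_t(s)` (time 0-indexed). -/
noncomputable def occS (P : ℕ → S → A → S → ℝ) (π : ℕ → S → A → ℝ) (d1 : S → ℝ) :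
    ℕ → S → ℝ
  | 0 => d1
  | t + 1 => fun s' => ∑ s : S, ∑ a : A, occS P π d1 t s * π t s a * P t s a s'

/-- Marginal state-action occupancy `d^π_t(s,a) = d^π_t(s) π_t(a|s)`. -/
noncomputable def occSA (P : ℕ → S → A → S → ℝ) (π : ℕ → S → A → ℝ) (d1 : S → ℝ)
    (t : ℕ) (s : S) (a : A) : ℝ :=
  occS P π d1 t s * π t s a

end MDPDefs
section RewardDefs

variable {S A : Type} [Fintype S] [Fintype A]

/-- `R` is a family of reward distributions supported on `[0,1]`. -/
def IsRewardDist (R : ℕ → S → A → MeasureTheory.Measure ℝ) : Prop :=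
  ∀ t (s : S) (a : A),
    MeasureTheory.IsProbabilityMeasure (R t s a) ∧ R t s a ((Set.Icc (0 : ℝ) 1)ᶜ) = 0

/-- The mean reward `r̄_t(s,a)` of the reward distribution `R_t(·|s,a)`. -/
noncomputable def rbar (R : ℕ → S → A → MeasureTheory.Measure ℝ) (t : ℕ) (s : S) (a : A) : ℝ :=
  ∫ x, x ∂(R t s a)

/-- The conditional variance `Var[r_t + V^π_{t+1}(s_{t+1}) | s_t = s, a_t = a]`,
where `s_{t+1} ~ P_t(·|s,a)` and `r_t ~ R_t(·|s,a)` are independent. -/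
noncomputable def condVar (H : ℕ) (P : ℕ → S → A → S → ℝ)
    (R : ℕ → S → A → MeasureTheory.Measure ℝ)
    (π : ℕ → S → A → ℝ) (t : ℕ) (s : S) (a : A) : ℝ :=
  (∑ s' : S, P t s a s' * ∫ x, (valueV H P (rbar R) π (t + 1) s' + x) ^ 2 ∂(R t s a))
    - qval H P (rbar R) π t s a ^ 2

end RewardDefs
section TrajDefs

variable {S A : Type} [Fintype S] [Fintype A]

/-- The probability that policy `π` traces the state-action path
`p = ((s₁,a₁),…,(s_H,a_H))` in the MDP `(P, d₁)`. -/
noncomputable def trajWeight (H : ℕ) (hH : 0 < H) (P : ℕ → S → A → S → ℝ)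
    (π : ℕ → S → A → ℝ) (d1 : S → ℝ) (p : Fin H → S × A) : ℝ :=
  d1 (p ⟨0, hH⟩).1 *
    ∏ h : Fin H, (π h (p h).1 (p h).2 *
      if h' : (h : ℕ) + 1 < H then P h (p h).1 (p h).2 (p ⟨(h : ℕ) + 1, h'⟩).1 else 1)

/-- The law of the random trajectory `((s₁,a₁),r₁),…,((s_H,a_H),r_H)` obtained by
running policy `π` in the MDP `(P, R, d₁)`: a mixture, over discrete state-action
paths `p`, of product measures in which the rewards are conditionally independent
with `r_h ~ R_h(·|s_h,a_h)`. -/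
noncomputable def trajMeasure [MeasurableSpace S] [MeasurableSpace A]
    (H : ℕ) (hH : 0 < H) (P : ℕ → S → A → S → ℝ)
    (R : ℕ → S → A → MeasureTheory.Measure ℝ)
    (π : ℕ → S → A → ℝ) (d1 : S → ℝ) : MeasureTheory.Measure (Fin H → (S × A) × ℝ) :=
  ∑ p : Fin H → S × A, ENNReal.ofReal (trajWeight H hH P π d1 p) •
    MeasureTheory.Measure.pi fun h =>
      (MeasureTheory.Measure.dirac (p h)).prod (R h (p h).1 (p h).2)

end TrajDefs
section FinitePart
variable {S A : Type} [Fintype S] [Fintype A]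

/-- Per-step variance of next-state value. -/
noncomputable def varPP (H : ℕ) (P : ℕ → S → A → S → ℝ) (r : ℕ → S → A → ℝ)
    (pol : ℕ → S → A → ℝ) (t : ℕ) (s : S) (a : A) : ℝ :=
  (∑ s' : S, P t s a s' * (valueV H P r pol (t+1) s')^2)
    - (∑ s' : S, P t s a s' * valueV H P r pol (t+1) s')^2

noncomputable def myW : (H : ℕ) → (ℕ → S → A → S → ℝ) → (ℕ → S → A → ℝ) → (S → ℝ) →
    (Fin H → S × A) → ℝ
  | 0, _, _, _, _ => 1
  | (H+1), P, pol, d1, p => d1 (p 0).1 * pol 0 (p 0).1 (p 0).2 *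
      myW H (fun u => P (u+1)) (fun u => pol (u+1)) (P 0 (p 0).1 (p 0).2) (Fin.tail p)

lemma sum_path_cons (H : ℕ) (f : (Fin (H+1) → S×A) → ℝ) :
    ∑ p : Fin (H+1) → S×A, f p = ∑ x : S×A, ∑ q : Fin H → S×A, f (Fin.cons x q) := by
  rw [← Equiv.sum_comp (Fin.consEquiv (fun _ : Fin (H+1) => S×A)) f, Fintype.sum_prod_type]
  rfl

@[simp] lemma myW_cons (H : ℕ) (P : ℕ → S → A → S → ℝ) (pol : ℕ → S → A → ℝ) (d1 : S → ℝ)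
    (x : S×A) (q : Fin H → S×A) :
    myW (H+1) P pol d1 (Fin.cons x q) = d1 x.1 * pol 0 x.1 x.2 *
      myW H (fun u => P (u+1)) (fun u => pol (u+1)) (P 0 x.1 x.2) q := by
  simp [myW, Fin.tail_cons]

lemma valueV_shift (H : ℕ) (P : ℕ → S → A → S → ℝ) (r pol : ℕ → S → A → ℝ) :
    ∀ t s, valueV H (fun u => P (u+1)) (fun u => r (u+1)) (fun u => pol (u+1)) t s
      = valueV (H+1) P r pol (t+1) s := by
  suffices h : ∀ k t, H - t ≤ k → ∀ s,
      valueV H (fun u => P (u+1)) (fun u => r (u+1)) (fun u => pol (u+1)) t s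
        = valueV (H+1) P r pol (t+1) s by
    exact fun t s => h (H - t) t le_rfl s
  intro k
  induction k with
  | zero =>
    intro t ht s
    rw [valueV]
    conv_rhs => rw [valueV]
    simp [show ¬ t < H by omega, show ¬ t+1 < H+1 by omega]
  | succ k ih =>
    intro t ht s
    by_cases h1 : t < H
    · rw [valueV]
      conv_rhs => rw [valueV]
      simp only [dif_pos h1, dif_pos (show t+1 < H+1 by omega)]
      refine Finset.sum_congr rfl fun a _ => ?_
      congr 1
      congr 1
      refine Finset.sum_congr rfl fun s' _ => ?_
      rw [ih (t+1) (by omega) s']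
    · rw [valueV]
      conv_rhs => rw [valueV]
      simp [h1, show ¬ t+1 < H+1 by omega]

lemma occS_shift (P : ℕ → S → A → S → ℝ) (pol : ℕ → S → A → ℝ) (d1 : S → ℝ) :
    ∀ t s, occS P pol d1 (t+1) s
      = ∑ s0 : S, ∑ a0 : A, d1 s0 * pol 0 s0 a0 *
          occS (fun u => P (u+1)) (fun u => pol (u+1)) (P 0 s0 a0) t s := by
  intro t
  induction t with
  | zero =>
    intro s
    simp only [occS]
  | succ t ih =>
    intro s
    show ∑ s1 : S, ∑ a1 : A, occS P pol d1 (t+1) s1 * pol (t+1) s1 a1 * P (t+1) s1 a1 s = _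
    have : ∀ s1 a1, occS P pol d1 (t+1) s1 * pol (t+1) s1 a1 * P (t+1) s1 a1 s
        = ∑ s0 : S, ∑ a0 : A, d1 s0 * pol 0 s0 a0 *
            (occS (fun u => P (u+1)) (fun u => pol (u+1)) (P 0 s0 a0) t s1 *
              pol (t+1) s1 a1 * P (t+1) s1 a1 s) := by
      intro s1 a1
      rw [ih s1, Finset.sum_mul, Finset.sum_mul]
      refine Finset.sum_congr rfl fun s0 _ => ?_
      rw [Finset.sum_mul, Finset.sum_mul]
      exact Finset.sum_congr rfl fun a0 _ => by ring
    simp_rw [this]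
    have key : ∀ (F : S → A → S → A → ℝ),
        (∑ s1 : S, ∑ a1 : A, ∑ s0 : S, ∑ a0 : A, F s1 a1 s0 a0)
          = ∑ s0 : S, ∑ a0 : A, ∑ s1 : S, ∑ a1 : A, F s1 a1 s0 a0 := by
      intro F
      calc (∑ s1 : S, ∑ a1 : A, ∑ s0 : S, ∑ a0 : A, F s1 a1 s0 a0)
          = ∑ x : S × A, ∑ y : S × A, F x.1 x.2 y.1 y.2 := by
            simp [Fintype.sum_prod_type]
        _ = ∑ y : S × A, ∑ x : S × A, F x.1 x.2 y.1 y.2 := Finset.sum_comm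
        _ = _ := by
            simp [Fintype.sum_prod_type]
    rw [key]
    refine Finset.sum_congr rfl fun s0 _ => Finset.sum_congr rfl fun a0 _ => ?_
    show _ = d1 s0 * pol 0 s0 a0 *
      ∑ s1 : S, ∑ a1 : A, occS (fun u => P (u+1)) (fun u => pol (u+1)) (P 0 s0 a0) t s1 *
        pol (t+1) s1 a1 * P (t+1) s1 a1 s
    rw [Finset.mul_sum]
    refine Finset.sum_congr rfl fun s1 _ => ?_
    rw [Finset.mul_sum]

lemma IsKernel.shift {P : ℕ → S → A → S → ℝ} (hP : IsKernel P) :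
    IsKernel (fun u => P (u+1)) := ⟨fun t => hP.1 (t+1), fun t => hP.2 (t+1)⟩

lemma IsPolicy.shift {pol : ℕ → S → A → ℝ} (hpol : IsPolicy pol) :
    IsPolicy (fun u => pol (u+1)) := ⟨fun t => hpol.1 (t+1), fun t => hpol.2 (t+1)⟩

lemma IsKernel.dist {P : ℕ → S → A → S → ℝ} (hP : IsKernel P) (s : S) (a : A) :
    IsDist (P 0 s a) := ⟨hP.1 0 s a, hP.2 0 s a⟩

lemma sq_sum_le_sum_sq {ι : Type*} [Fintype ι] (w f : ι → ℝ) (hw : ∀ i, 0 ≤ w i)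
    (hw1 : ∑ i, w i = 1) : (∑ i, w i * f i)^2 ≤ ∑ i, w i * f i^2 := by
  calc (∑ i, w i * f i)^2
      = (∑ i, Real.sqrt (w i) * (Real.sqrt (w i) * f i))^2 := by
        congr 1
        exact Finset.sum_congr rfl fun i _ => by
          rw [← mul_assoc, Real.mul_self_sqrt (hw i)]
    _ ≤ (∑ i, Real.sqrt (w i)^2) * ∑ i, (Real.sqrt (w i) * f i)^2 :=
        Finset.sum_mul_sq_le_sq_mul_sq _ _ _
    _ = ∑ i, w i * f i^2 := by
        simp_rw [mul_pow, Real.sq_sqrt (hw _)]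
        rw [hw1, one_mul]

lemma myW_sum_eq_one : ∀ (H : ℕ) (P : ℕ → S → A → S → ℝ) (pol : ℕ → S → A → ℝ)
    (d1 : S → ℝ), IsKernel P → IsPolicy pol → IsDist d1 →
    ∑ p : Fin H → S×A, myW H P pol d1 p = 1 := by
  intro H
  induction H with
  | zero =>
    intro P pol d1 _ _ _
    simp [myW]
  | succ H ih =>
    intro P pol d1 hP hpol hd1
    rw [sum_path_cons]
    have hx : ∀ x : S×A, ∑ q : Fin H → S×A, myW (H+1) P pol d1 (Fin.cons x q)
        = d1 x.1 * pol 0 x.1 x.2 := by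
      intro x
      simp only [myW_cons]
      rw [← Finset.mul_sum, ih _ _ _ hP.shift hpol.shift (hP.dist x.1 x.2), mul_one]
    simp_rw [hx]
    rw [Fintype.sum_prod_type]
    have : ∀ s : S, ∑ a : A, d1 s * pol 0 s a = d1 s := by
      intro s; rw [← Finset.mul_sum, hpol.2 0 s, mul_one]
    simp_rw [this]
    exact hd1.2

lemma myW_mean : ∀ (H : ℕ) (P : ℕ → S → A → S → ℝ) (rb : ℕ → S → A → ℝ)
    (pol : ℕ → S → A → ℝ) (d1 : S → ℝ), IsKernel P → IsPolicy pol → IsDist d1 →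
    ∑ p : Fin H → S×A, myW H P pol d1 p * (∑ h : Fin H, rb (h:ℕ) (p h).1 (p h).2)
      = ∑ s : S, d1 s * valueV H P rb pol 0 s := by
  intro H
  induction H with
  | zero =>
    intro P rb pol d1 _ _ _
    have hv : ∀ s : S, valueV 0 P rb pol 0 s = 0 := by
      intro s; rw [valueV]; simp
    simp [hv]
  | succ H ih =>
    intro P rb pol d1 hP hpol hd1
    rw [sum_path_cons]
    have hx : ∀ x : S×A, ∑ q : Fin H → S×A, myW (H+1) P pol d1 (Fin.cons x q) *
          (∑ h : Fin (H+1), rb (h:ℕ) (((Fin.cons x q : Fin (H+1) → S×A)) h).1 (((Fin.cons x q : Fin (H+1) → S×A)) h).2)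
        = d1 x.1 * pol 0 x.1 x.2 * (rb 0 x.1 x.2 +
            ∑ s' : S, P 0 x.1 x.2 s' * valueV (H+1) P rb pol 1 s') := by
      intro x
      have hsplit : ∀ q : Fin H → S×A,
          (∑ h : Fin (H+1), rb (h:ℕ) (((Fin.cons x q : Fin (H+1) → S×A)) h).1 (((Fin.cons x q : Fin (H+1) → S×A)) h).2)
            = rb 0 x.1 x.2 + ∑ h : Fin H, rb ((h:ℕ)+1) (q h).1 (q h).2 := by
        intro q
        rw [Fin.sum_univ_succ]
        simp [Fin.cons_succ]
      simp only [myW_cons, hsplit]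
      have hring : ∀ q : Fin H → S×A,
          d1 x.1 * pol 0 x.1 x.2 *
              myW H (fun u => P (u+1)) (fun u => pol (u+1)) (P 0 x.1 x.2) q *
            (rb 0 x.1 x.2 + ∑ h : Fin H, rb ((h:ℕ)+1) (q h).1 (q h).2)
          = d1 x.1 * pol 0 x.1 x.2 *
              (rb 0 x.1 x.2 * myW H (fun u => P (u+1)) (fun u => pol (u+1)) (P 0 x.1 x.2) q +
               myW H (fun u => P (u+1)) (fun u => pol (u+1)) (P 0 x.1 x.2) q *
                 (∑ h : Fin H, rb ((h:ℕ)+1) (q h).1 (q h).2)) := by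
        intro q; ring
      simp_rw [hring, ← Finset.mul_sum]
      congr 1
      rw [Finset.sum_add_distrib, ← Finset.mul_sum,
        myW_sum_eq_one H _ _ _ hP.shift hpol.shift (hP.dist x.1 x.2), mul_one,
        ih _ (fun u => rb (u+1)) _ _ hP.shift hpol.shift (hP.dist x.1 x.2)]
      congr 1
      exact Finset.sum_congr rfl fun s' _ => by rw [valueV_shift]
    simp_rw [hx]
    rw [Fintype.sum_prod_type]
    have hV : ∀ s : S, valueV (H+1) P rb pol 0 s
        = ∑ a : A, pol 0 s a * (rb 0 s a + ∑ s' : S, P 0 s a s' * valueV (H+1) P rb pol 1 s') := by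
      intro s; rw [valueV]; simp
    simp_rw [hV, Finset.mul_sum]
    exact Finset.sum_congr rfl fun s _ => Finset.sum_congr rfl fun a _ => by ring

lemma varPP_shift (H : ℕ) (P : ℕ → S → A → S → ℝ) (rb pol : ℕ → S → A → ℝ)
    (t : ℕ) (s : S) (a : A) :
    varPP H (fun u => P (u+1)) (fun u => rb (u+1)) (fun u => pol (u+1)) t s a
      = varPP (H+1) P rb pol (t+1) s a := by
  unfold varPP
  simp_rw [valueV_shift]

lemma core_ineq : ∀ (H : ℕ) (P : ℕ → S → A → S → ℝ) (rb nu pol : ℕ → S → A → ℝ)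
    (d1 : S → ℝ), IsKernel P → IsPolicy pol → IsDist d1 →
    (∑ s : S, d1 s * (valueV H P rb pol 0 s)^2)
      + ∑ t ∈ Finset.range H, ∑ s : S, ∑ a : A,
          occSA P pol d1 t s a * (nu t s a + varPP H P rb pol t s a)
    ≤ ∑ p : Fin H → S×A, myW H P pol d1 p *
        ((∑ h : Fin H, rb (h:ℕ) (p h).1 (p h).2)^2
          + ∑ h : Fin H, nu (h:ℕ) (p h).1 (p h).2) := by
  intro H
  induction H with
  | zero =>
    intro P rb nu pol d1 _ _ _
    have hv : ∀ s : S, valueV 0 P rb pol 0 s = 0 := by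
      intro s; rw [valueV]; simp
    simp [hv]
  | succ H ih =>
    intro P rb nu pol d1 hP hpol hd1
    -- abbreviations
    set Pr : ℕ → S → A → S → ℝ := fun u => P (u+1) with hPr
    set rbr : ℕ → S → A → ℝ := fun u => rb (u+1) with hrbr
    set nur : ℕ → S → A → ℝ := fun u => nu (u+1) with hnur
    set polr : ℕ → S → A → ℝ := fun u => pol (u+1) with hpolr
    have hD : ∀ x : S×A, 0 ≤ d1 x.1 * pol 0 x.1 x.2 :=
      fun x => mul_nonneg (hd1.1 x.1) (hpol.1 0 x.1 x.2)
    -- value at time 1 and Q-function at time 0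
    set V1 : S → ℝ := fun s => valueV (H+1) P rb pol 1 s with hV1
    set Q0 : S → A → ℝ := fun s a => rb 0 s a + ∑ s' : S, P 0 s a s' * V1 s' with hQ0
    -- suffix quantity
    set Sq : S×A → ℝ := fun x => ∑ q : Fin H → S×A, myW H Pr polr (P 0 x.1 x.2) q *
        ((∑ h : Fin H, rbr (h:ℕ) (q h).1 (q h).2)^2
          + ∑ h : Fin H, nur (h:ℕ) (q h).1 (q h).2) with hSq
    set T : S×A → ℝ := fun x => ∑ t ∈ Finset.range H, ∑ s : S, ∑ a : A,
        occSA Pr polr (P 0 x.1 x.2) t s a * (nu (t+1) s a + varPP (H+1) P rb pol (t+1) s a)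
        with hT
    -- Step 1 : rewrite the RHS path sum
    have step1 : ∑ p : Fin (H+1) → S×A, myW (H+1) P pol d1 p *
        ((∑ h : Fin (H+1), rb (h:ℕ) (p h).1 (p h).2)^2
          + ∑ h : Fin (H+1), nu (h:ℕ) (p h).1 (p h).2)
        = ∑ x : S×A, d1 x.1 * pol 0 x.1 x.2 *
            (Sq x + 2 * rb 0 x.1 x.2 * (∑ s' : S, P 0 x.1 x.2 s' * V1 s')
              + (rb 0 x.1 x.2 ^ 2 + nu 0 x.1 x.2)) := by
      rw [sum_path_cons]
      refine Finset.sum_congr rfl fun x _ => ?_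
      have hsplit : ∀ q : Fin H → S×A,
          (∑ h : Fin (H+1), rb (h:ℕ) (((Fin.cons x q : Fin (H+1) → S×A)) h).1
            (((Fin.cons x q : Fin (H+1) → S×A)) h).2)
            = rb 0 x.1 x.2 + ∑ h : Fin H, rbr ((h:ℕ)) (q h).1 (q h).2 := by
        intro q
        rw [Fin.sum_univ_succ]
        simp [Fin.cons_succ, hrbr]
      have hsplitn : ∀ q : Fin H → S×A,
          (∑ h : Fin (H+1), nu (h:ℕ) (((Fin.cons x q : Fin (H+1) → S×A)) h).1
            (((Fin.cons x q : Fin (H+1) → S×A)) h).2)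
            = nu 0 x.1 x.2 + ∑ h : Fin H, nur ((h:ℕ)) (q h).1 (q h).2 := by
        intro q
        rw [Fin.sum_univ_succ]
        simp [Fin.cons_succ, hnur]
      simp only [myW_cons, hsplit, hsplitn, ← hPr, ← hpolr]
      have hring : ∀ q : Fin H → S×A,
          d1 x.1 * pol 0 x.1 x.2 * myW H Pr polr (P 0 x.1 x.2) q *
            ((rb 0 x.1 x.2 + ∑ h : Fin H, rbr (h:ℕ) (q h).1 (q h).2)^2
              + (nu 0 x.1 x.2 + ∑ h : Fin H, nur (h:ℕ) (q h).1 (q h).2))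
          = d1 x.1 * pol 0 x.1 x.2 *
              (myW H Pr polr (P 0 x.1 x.2) q *
                  ((∑ h : Fin H, rbr (h:ℕ) (q h).1 (q h).2)^2
                    + ∑ h : Fin H, nur (h:ℕ) (q h).1 (q h).2)
                + (2 * rb 0 x.1 x.2) * (myW H Pr polr (P 0 x.1 x.2) q *
                    (∑ h : Fin H, rbr (h:ℕ) (q h).1 (q h).2))
                + (rb 0 x.1 x.2 ^ 2 + nu 0 x.1 x.2) * myW H Pr polr (P 0 x.1 x.2) q) := by
        intro q; ring
      simp_rw [hring, ← Finset.mul_sum]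
      congr 1
      rw [Finset.sum_add_distrib, Finset.sum_add_distrib, ← Finset.mul_sum, ← Finset.mul_sum,
        myW_sum_eq_one H _ _ _ hP.shift hpol.shift (hP.dist x.1 x.2), mul_one,
        myW_mean H Pr rbr polr _ hP.shift hpol.shift (hP.dist x.1 x.2)]
      have : ∀ s' : S, valueV H Pr rbr polr 0 s' = V1 s' := by
        intro s'
        rw [hPr, hrbr, hpolr, hV1]
        exact valueV_shift H P rb pol 0 s'
      simp_rw [this]
      rfl
    rw [step1]
    -- Step 2 : apply induction hypothesis for each x
    have step2 : ∀ x : S×A,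
        (∑ s' : S, P 0 x.1 x.2 s' * (V1 s')^2) + T x ≤ Sq x := by
      intro x
      have h0 := ih Pr rbr nur polr (P 0 x.1 x.2) hP.shift hpol.shift (hP.dist x.1 x.2)
      have hv : ∀ s' : S, valueV H Pr rbr polr 0 s' = V1 s' :=
        fun s' => valueV_shift H P rb pol 0 s'
      have hvar : ∀ t s a, varPP H Pr rbr polr t s a = varPP (H+1) P rb pol (t+1) s a :=
        fun t s a => varPP_shift H P rb pol t s a
      simp_rw [hv, hvar] at h0
      exact h0
    -- Step 3 : lower bound
    have step3 : ∑ x : S×A, d1 x.1 * pol 0 x.1 x.2 *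
          ((∑ s' : S, P 0 x.1 x.2 s' * (V1 s')^2) + T x
            + 2 * rb 0 x.1 x.2 * (∑ s' : S, P 0 x.1 x.2 s' * V1 s')
            + (rb 0 x.1 x.2 ^ 2 + nu 0 x.1 x.2))
        ≤ ∑ x : S×A, d1 x.1 * pol 0 x.1 x.2 *
            (Sq x + 2 * rb 0 x.1 x.2 * (∑ s' : S, P 0 x.1 x.2 s' * V1 s')
              + (rb 0 x.1 x.2 ^ 2 + nu 0 x.1 x.2)) := by
      refine Finset.sum_le_sum fun x _ => mul_le_mul_of_nonneg_left ?_ (hD x)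
      have := step2 x
      linarith
    refine le_trans ?_ step3
    -- Step 4 : rewrite each term via Q0 and varPP at time 0
    have step4 : ∀ x : S×A,
        d1 x.1 * pol 0 x.1 x.2 *
          ((∑ s' : S, P 0 x.1 x.2 s' * (V1 s')^2) + T x
            + 2 * rb 0 x.1 x.2 * (∑ s' : S, P 0 x.1 x.2 s' * V1 s')
            + (rb 0 x.1 x.2 ^ 2 + nu 0 x.1 x.2))
        = d1 x.1 * pol 0 x.1 x.2 * (Q0 x.1 x.2)^2
          + d1 x.1 * pol 0 x.1 x.2 *
              (nu 0 x.1 x.2 + varPP (H+1) P rb pol 0 x.1 x.2)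
          + d1 x.1 * pol 0 x.1 x.2 * T x := by
      intro x
      have hvp : varPP (H+1) P rb pol 0 x.1 x.2
          = (∑ s' : S, P 0 x.1 x.2 s' * (V1 s')^2)
            - (∑ s' : S, P 0 x.1 x.2 s' * V1 s')^2 := rfl
      rw [hvp, hQ0]
      ring
    simp_rw [step4]
    rw [Finset.sum_add_distrib, Finset.sum_add_distrib]
    -- Now compare the three pieces with the LHS
    have piece1 : ∑ s : S, d1 s * (valueV (H+1) P rb pol 0 s)^2
        ≤ ∑ x : S×A, d1 x.1 * pol 0 x.1 x.2 * (Q0 x.1 x.2)^2 := by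
      rw [Fintype.sum_prod_type]
      have hV : ∀ s : S, valueV (H+1) P rb pol 0 s = ∑ a : A, pol 0 s a * Q0 s a := by
        intro s; rw [valueV]; simp [hQ0, hV1]
      refine Finset.sum_le_sum fun s _ => ?_
      have hj : (∑ a : A, pol 0 s a * Q0 s a)^2 ≤ ∑ a : A, pol 0 s a * (Q0 s a)^2 :=
        sq_sum_le_sum_sq (pol 0 s) (Q0 s) (hpol.1 0 s) (hpol.2 0 s)
      calc d1 s * (valueV (H+1) P rb pol 0 s)^2
          = d1 s * (∑ a : A, pol 0 s a * Q0 s a)^2 := by rw [hV]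
        _ ≤ d1 s * ∑ a : A, pol 0 s a * (Q0 s a)^2 :=
            mul_le_mul_of_nonneg_left hj (hd1.1 s)
        _ = ∑ a : A, d1 s * pol 0 s a * (Q0 s a)^2 := by
            rw [Finset.mul_sum]
            exact Finset.sum_congr rfl fun a _ => by ring
    have piece2 : ∑ s : S, ∑ a : A, occSA P pol d1 0 s a *
          (nu 0 s a + varPP (H+1) P rb pol 0 s a)
        = ∑ x : S×A, d1 x.1 * pol 0 x.1 x.2 *
            (nu 0 x.1 x.2 + varPP (H+1) P rb pol 0 x.1 x.2) := by
      rw [Fintype.sum_prod_type]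
      exact Finset.sum_congr rfl fun s _ => Finset.sum_congr rfl fun a _ => by
        simp [occSA, occS]
    have piece3 : ∑ t ∈ Finset.range H, ∑ s : S, ∑ a : A,
          occSA P pol d1 (t+1) s a * (nu (t+1) s a + varPP (H+1) P rb pol (t+1) s a)
        = ∑ x : S×A, d1 x.1 * pol 0 x.1 x.2 * T x := by
      simp_rw [hT, Finset.mul_sum]
      conv_rhs => rw [Finset.sum_comm]
      refine Finset.sum_congr rfl fun t _ => ?_
      conv_rhs => rw [Finset.sum_comm]
      refine Finset.sum_congr rfl fun s _ => ?_
      conv_rhs => rw [Finset.sum_comm]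
      refine Finset.sum_congr rfl fun a _ => ?_
      have : ∀ x : S×A, d1 x.1 * pol 0 x.1 x.2 *
            (occSA Pr polr (P 0 x.1 x.2) t s a * (nu (t+1) s a + varPP (H+1) P rb pol (t+1) s a))
          = (d1 x.1 * pol 0 x.1 x.2 * occS Pr polr (P 0 x.1 x.2) t s) *
              (polr t s a * (nu (t+1) s a + varPP (H+1) P rb pol (t+1) s a)) := by
        intro x; rw [occSA]; ring
      simp_rw [this]
      rw [← Finset.sum_mul]
      have hocc : ∑ x : S×A, d1 x.1 * pol 0 x.1 x.2 * occS Pr polr (P 0 x.1 x.2) t s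
          = occS P pol d1 (t+1) s := by
        rw [occS_shift, Fintype.sum_prod_type]
      rw [hocc, occSA]
      have : polr t s a = pol (t+1) s a := rfl
      rw [this]
      ring
    rw [Finset.sum_range_succ' (fun t => ∑ s : S, ∑ a : A,
      occSA P pol d1 t s a * (nu t s a + varPP (H+1) P rb pol t s a)) H]
    rw [piece2, piece3]
    linarith [piece1]

lemma trajWeight_eq_myW : ∀ (H : ℕ) (hH : 0 < H) (P : ℕ → S → A → S → ℝ)
    (pol : ℕ → S → A → ℝ) (d1 : S → ℝ) (p : Fin H → S × A),
    trajWeight H hH P pol d1 p = myW H P pol d1 p := by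
  intro H
  induction H with
  | zero => intro hH; exact absurd hH (by omega)
  | succ H ih =>
    intro hH P pol d1 p
    unfold trajWeight
    rw [Fin.prod_univ_succ]
    cases H with
    | zero =>
      simp [myW]
    | succ H' =>
      have key : trajWeight (H'+1) (Nat.succ_pos H') (fun u => P (u+1)) (fun u => pol (u+1))
            (P 0 (p 0).1 (p 0).2) (Fin.tail p)
          = P 0 (p 0).1 (p 0).2 (p ⟨1, by omega⟩).1 *
            ∏ i : Fin (H'+1), (pol ((i:ℕ)+1) (p i.succ).1 (p i.succ).2 *
              if h' : (i:ℕ) + 1 + 1 < H'+2 then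
                P ((i:ℕ)+1) (p i.succ).1 (p i.succ).2 (p ⟨(i:ℕ)+2, h'⟩).1 else 1) := by
        unfold trajWeight
        congr 1
        refine Finset.prod_congr rfl fun i _ => ?_
        congr 1
        by_cases hc : (i:ℕ)+1 < H'+1
        · rw [dif_pos hc, dif_pos (show (i:ℕ)+1+1 < H'+2 by omega)]
          rfl
        · rw [dif_neg hc, dif_neg (by omega)]
      have rhs_eq : myW (H'+2) P pol d1 p
          = d1 (p 0).1 * pol 0 (p 0).1 (p 0).2 *
            (P 0 (p 0).1 (p 0).2 (p ⟨1, by omega⟩).1 *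
              ∏ i : Fin (H'+1), (pol ((i:ℕ)+1) (p i.succ).1 (p i.succ).2 *
                if h' : (i:ℕ) + 1 + 1 < H'+2 then
                  P ((i:ℕ)+1) (p i.succ).1 (p i.succ).2 (p ⟨(i:ℕ)+2, h'⟩).1 else 1)) := by
        show d1 (p 0).1 * pol 0 (p 0).1 (p 0).2 *
            myW (H'+1) (fun u => P (u+1)) (fun u => pol (u+1)) (P 0 (p 0).1 (p 0).2)
              (Fin.tail p) = _
        rw [← ih (Nat.succ_pos H'), key]
      rw [rhs_eq]
      have h0 : ((0 : Fin (H'+2)) : ℕ) + 1 < H'+2 := by simp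
      rw [dif_pos h0]
      have hmk : p ⟨0, hH⟩ = p 0 := by norm_num
      have hmk1 : (p ⟨((0 : Fin (H'+2)) : ℕ) + 1, h0⟩).1 = (p ⟨1, by omega⟩).1 := by norm_num
      rw [hmk, hmk1]
      have hprod : ∏ i : Fin (H'+1),
          (pol (i.succ) (p i.succ).1 (p i.succ).2 *
            if h' : ((i.succ : Fin (H'+2)) : ℕ) + 1 < H'+2 then
              P (i.succ) (p i.succ).1 (p i.succ).2 (p ⟨((i.succ : Fin (H'+2)) : ℕ) + 1, h'⟩).1
            else 1)
          = ∏ i : Fin (H'+1), (pol ((i:ℕ)+1) (p i.succ).1 (p i.succ).2 *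
              if h' : (i:ℕ) + 1 + 1 < H'+2 then
                P ((i:ℕ)+1) (p i.succ).1 (p i.succ).2 (p ⟨(i:ℕ)+2, h'⟩).1 else 1) := by
        refine Finset.prod_congr rfl fun i _ => ?_
        congr 1
      rw [hprod]
      simp only [Fin.val_zero]
      ring

end FinitePart


/-- Fubini for products of probability measures on ℝ. -/
lemma integral_pi_prod : ∀ {n : ℕ} (μ : Fin n → Measure ℝ)
    [∀ i, IsProbabilityMeasure (μ i)] (f : Fin n → ℝ → ℝ),
    ∫ x, ∏ i, f i (x i) ∂Measure.pi μ = ∏ i, ∫ x, f i x ∂μ i := by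
  intro n
  induction n with
  | zero => intro μ _ f; simp
  | succ n ih =>
    intro μ _ f
    calc ∫ x, ∏ i, f i (x i) ∂Measure.pi μ
        = ∫ x : ℝ × (Fin n → ℝ), f 0 x.1 * ∏ i : Fin n, f i.succ (x.2 i)
            ∂((μ 0).prod (Measure.pi fun i => μ i.succ)) := by
          rw [← ((measurePreserving_piFinSuccAbove μ 0).symm).integral_comp']
          simp_rw [MeasurableEquiv.piFinSuccAbove_symm_apply, Fin.insertNthEquiv,
            Fin.prod_univ_succ, Fin.insertNth_zero, Equiv.coe_fn_mk, Fin.cons_succ,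
            Fin.zero_succAbove, Fin.cons_zero, cast_eq]
      _ = (∫ x, f 0 x ∂μ 0) * ∏ i : Fin n, ∫ x, f i.succ x ∂μ i.succ := by
          rw [← ih, ← integral_prod_mul]
      _ = ∏ i, ∫ x, f i x ∂μ i := by rw [Fin.prod_univ_succ]

lemma integral_pi_eval {n : ℕ} (μ : Fin n → Measure ℝ)
    [∀ i, IsProbabilityMeasure (μ i)] (g : ℝ → ℝ) (h : Fin n) :
    ∫ x, g (x h) ∂Measure.pi μ = ∫ y, g y ∂μ h := by
  have key := integral_pi_prod μ (fun i => if i = h then g else fun _ => 1)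
  have l : ∀ x : Fin n → ℝ, (∏ i, (if i = h then g else fun _ => 1) (x i)) = g (x h) := by
    intro x
    rw [Finset.prod_eq_single h]
    · simp
    · intro i _ hi; simp [hi]
    · simp
  have r : (∏ i, ∫ x, (if i = h then g else fun _ => 1) x ∂μ i) = ∫ y, g y ∂μ h := by
    rw [Finset.prod_eq_single h]
    · simp
    · intro i _ hi; simp [hi]
    · simp
  simp_rw [l] at key
  rw [r] at key
  exact key

lemma integral_pi_eval_two {n : ℕ} (μ : Fin n → Measure ℝ)
    [∀ i, IsProbabilityMeasure (μ i)] (g1 g2 : ℝ → ℝ) (h k : Fin n) (hhk : h ≠ k) :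
    ∫ x, g1 (x h) * g2 (x k) ∂Measure.pi μ = (∫ y, g1 y ∂μ h) * ∫ y, g2 y ∂μ k := by
  classical
  have key := integral_pi_prod μ
    (fun i => if i = h then g1 else if i = k then g2 else fun _ => 1)
  have l : ∀ x : Fin n → ℝ,
      (∏ i, (if i = h then g1 else if i = k then g2 else fun _ => 1) (x i))
        = g1 (x h) * g2 (x k) := by
    intro x
    rw [← Finset.mul_prod_erase Finset.univ _ (Finset.mem_univ h),
      ← Finset.mul_prod_erase _ _ (Finset.mem_erase.mpr ⟨Ne.symm hhk, Finset.mem_univ k⟩)]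
    have : ∀ i ∈ (Finset.univ.erase h).erase k,
        (if i = h then g1 else if i = k then g2 else fun _ => 1) (x i) = 1 := by
      intro i hi
      have h1 := (Finset.mem_erase.mp hi).1
      have h2 := (Finset.mem_erase.mp (Finset.mem_erase.mp hi).2).1
      simp [h1, h2]
    rw [Finset.prod_congr rfl this]
    simp [hhk, Ne.symm hhk]
  have r : (∏ i, ∫ x, (if i = h then g1 else if i = k then g2 else fun _ => 1) x ∂μ i)
      = (∫ y, g1 y ∂μ h) * ∫ y, g2 y ∂μ k := by
    rw [← Finset.mul_prod_erase Finset.univ _ (Finset.mem_univ h),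
      ← Finset.mul_prod_erase _ _ (Finset.mem_erase.mpr ⟨Ne.symm hhk, Finset.mem_univ k⟩)]
    have : ∀ i ∈ (Finset.univ.erase h).erase k,
        (∫ x, (if i = h then g1 else if i = k then g2 else fun _ => 1) x ∂μ i) = 1 := by
      intro i hi
      have h1 := (Finset.mem_erase.mp hi).1
      have h2 := (Finset.mem_erase.mp (Finset.mem_erase.mp hi).2).1
      simp [h1, h2]
    rw [Finset.prod_congr rfl this]
    simp [hhk, Ne.symm hhk]
  simp_rw [l] at key
  rw [r] at key
  exact key

lemma ae_Icc (μ : Measure ℝ) (hs : μ ((Set.Icc (0:ℝ) 1)ᶜ) = 0) :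
    ∀ᵐ y ∂μ, y ∈ Set.Icc (0:ℝ) 1 := by
  rw [ae_iff]
  exact hs

lemma ae_pi_coord {n : ℕ} (μ : Fin n → Measure ℝ) [∀ i, IsProbabilityMeasure (μ i)]
    (hs : ∀ i, μ i ((Set.Icc (0:ℝ) 1)ᶜ) = 0) :
    ∀ᵐ x ∂Measure.pi μ, ∀ i, x i ∈ Set.Icc (0:ℝ) 1 := by
  rw [ae_all_iff]
  intro i
  rw [ae_iff]
  have hset : {x : Fin n → ℝ | ¬ x i ∈ Set.Icc (0:ℝ) 1}
      = Set.pi Set.univ (Function.update (fun _ => Set.univ) i (Set.Icc (0:ℝ) 1)ᶜ) := by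
    ext x
    simp only [Set.mem_setOf_eq, Set.mem_pi, Set.mem_univ, forall_true_left,
      Function.update_apply]
    constructor
    · intro hx j
      by_cases hj : j = i
      · subst hj; simp [hx]
      · simp [hj]
    · intro hx
      have := hx i
      simpa using this
  rw [hset, Measure.pi_pi]
  refine Finset.prod_eq_zero (Finset.mem_univ i) ?_
  simp [hs i]

lemma integrable_coord {n : ℕ} (μ : Fin n → Measure ℝ) [∀ i, IsProbabilityMeasure (μ i)]
    (hs : ∀ i, μ i ((Set.Icc (0:ℝ) 1)ᶜ) = 0) (i : Fin n) :
    Integrable (fun x : Fin n → ℝ => x i) (Measure.pi μ) := by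
  refine Integrable.mono' (integrable_const 1) (measurable_pi_apply i).aestronglyMeasurable ?_
  filter_upwards [ae_pi_coord μ hs] with x hx
  rw [Real.norm_eq_abs]
  exact abs_le.mpr ⟨by linarith [(hx i).1], (hx i).2⟩

lemma integrable_coord_mul {n : ℕ} (μ : Fin n → Measure ℝ) [∀ i, IsProbabilityMeasure (μ i)]
    (hs : ∀ i, μ i ((Set.Icc (0:ℝ) 1)ᶜ) = 0) (i j : Fin n) :
    Integrable (fun x : Fin n → ℝ => x i * x j) (Measure.pi μ) := by
  refine Integrable.mono' (integrable_const 1)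
    ((measurable_pi_apply i).mul (measurable_pi_apply j)).aestronglyMeasurable ?_
  filter_upwards [ae_pi_coord μ hs] with x hx
  rw [Real.norm_eq_abs, abs_mul]
  have h1 : |x i| ≤ 1 := abs_le.mpr ⟨by linarith [(hx i).1], (hx i).2⟩
  have h2 : |x j| ≤ 1 := abs_le.mpr ⟨by linarith [(hx j).1], (hx j).2⟩
  calc |x i| * |x j| ≤ 1 * 1 := mul_le_mul h1 h2 (abs_nonneg _) zero_le_one
    _ = 1 := one_mul 1

lemma integrable_sum_coord {n : ℕ} (μ : Fin n → Measure ℝ) [∀ i, IsProbabilityMeasure (μ i)]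
    (hs : ∀ i, μ i ((Set.Icc (0:ℝ) 1)ᶜ) = 0) :
    Integrable (fun x : Fin n → ℝ => ∑ i, x i) (Measure.pi μ) :=
  integrable_finset_sum _ (fun i _ => integrable_coord μ hs i)

lemma integrable_sum_coord_sq {n : ℕ} (μ : Fin n → Measure ℝ) [∀ i, IsProbabilityMeasure (μ i)]
    (hs : ∀ i, μ i ((Set.Icc (0:ℝ) 1)ᶜ) = 0) :
    Integrable (fun x : Fin n → ℝ => (∑ i, x i)^2) (Measure.pi μ) := by
  refine Integrable.mono' (integrable_const ((n : ℝ)^2))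
    ((Finset.measurable_sum Finset.univ fun i _ =>
      measurable_pi_apply i).pow_const 2).aestronglyMeasurable ?_
  filter_upwards [ae_pi_coord μ hs] with x hx
  rw [Real.norm_eq_abs, abs_pow]
  have h1 : |∑ i, x i| ≤ (n : ℝ) := by
    calc |∑ i, x i| ≤ ∑ i, |x i| := Finset.abs_sum_le_sum_abs _ _
      _ ≤ ∑ _i : Fin n, (1:ℝ) :=
          Finset.sum_le_sum fun i _ => abs_le.mpr ⟨by linarith [(hx i).1], (hx i).2⟩
      _ = (n : ℝ) := by simp
  exact pow_le_pow_left₀ (abs_nonneg _) h1 2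

lemma integral_pi_sum {n : ℕ} (μ : Fin n → Measure ℝ) [∀ i, IsProbabilityMeasure (μ i)]
    (hs : ∀ i, μ i ((Set.Icc (0:ℝ) 1)ᶜ) = 0) :
    ∫ x, (∑ i, x i) ∂Measure.pi μ = ∑ i, ∫ y, y ∂μ i := by
  rw [integral_finset_sum _ (fun i _ => integrable_coord μ hs i)]
  exact Finset.sum_congr rfl fun i _ => integral_pi_eval μ (fun y => y) i

lemma diag_sum {n : ℕ} (m c : Fin n → ℝ) :
    (∑ i, ∑ j, (if i = j then c i else m i * m j))
      = (∑ i, m i)^2 + ∑ i, (c i - (m i)^2) := by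
  have per : ∀ i : Fin n, (∑ j, (if i = j then c i else m i * m j))
      = (∑ j, m i * m j) + (c i - m i * m i) := by
    intro i
    have hsplit : ∀ j : Fin n, (if i = j then c i else m i * m j)
        = m i * m j + (if i = j then c i - m i * m j else 0) := by
      intro j
      by_cases h : i = j <;> simp [h]
    simp_rw [hsplit]
    rw [Finset.sum_add_distrib, Finset.sum_ite_eq]
    simp
  simp_rw [per]
  rw [Finset.sum_add_distrib]
  congr 1
  · rw [sq, Finset.sum_mul_sum]
  · exact Finset.sum_congr rfl fun i _ => by rw [sq]

lemma integral_pi_sum_sq {n : ℕ} (μ : Fin n → Measure ℝ) [∀ i, IsProbabilityMeasure (μ i)]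
    (hs : ∀ i, μ i ((Set.Icc (0:ℝ) 1)ᶜ) = 0) :
    ∫ x, (∑ i, x i)^2 ∂Measure.pi μ
      = (∑ i, ∫ y, y ∂μ i)^2 + ∑ i, ((∫ y, y^2 ∂μ i) - (∫ y, y ∂μ i)^2) := by
  have hexp : ∀ x : Fin n → ℝ, (∑ i, x i)^2 = ∑ i, ∑ j, x i * x j := by
    intro x; rw [sq, Finset.sum_mul_sum]
  simp_rw [hexp]
  rw [integral_finset_sum _ (fun i _ =>
    integrable_finset_sum _ (fun j _ => integrable_coord_mul μ hs i j))]
  have hij : ∀ i : Fin n, ∫ x, (∑ j, x i * x j) ∂Measure.pi μ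
      = ∑ j, (if i = j then ∫ y, y^2 ∂μ i else (∫ y, y ∂μ i) * ∫ y, y ∂μ j) := by
    intro i
    rw [integral_finset_sum _ (fun j _ => integrable_coord_mul μ hs i j)]
    refine Finset.sum_congr rfl fun j _ => ?_
    by_cases hij : i = j
    · subst hij
      rw [if_pos rfl]
      have : ∀ x : Fin n → ℝ, x i * x i = (x i)^2 := fun x => (sq (x i)).symm
      simp_rw [this]
      exact integral_pi_eval μ (fun y => y^2) i
    · rw [if_neg hij]
      exact integral_pi_eval_two μ (fun y => y) (fun y => y) i j hij
  simp_rw [hij]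
  rw [diag_sum]
  congr 1
  rw [sq, Finset.sum_mul_sum]

lemma pi_dirac_prod {β : Type*} [MeasurableSpace β] {n : ℕ} (y : Fin n → β)
    (ν : Fin n → Measure ℝ) [∀ i, IsProbabilityMeasure (ν i)] :
    (Measure.pi fun i => (Measure.dirac (y i)).prod (ν i))
      = (Measure.pi ν).map (fun x i => (y i, x i)) := by
  have hφ : Measurable (fun (x : Fin n → ℝ) (i : Fin n) => (y i, x i)) :=
    measurable_pi_lambda _ fun i => measurable_const.prodMk (measurable_pi_apply i)
  refine (Measure.pi_eq (μ := fun i => (Measure.dirac (y i)).prod (ν i)) fun s hs => ?_)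
  rw [Measure.map_apply hφ (MeasurableSet.univ_pi hs)]
  have hpre : (fun (x : Fin n → ℝ) (i : Fin n) => (y i, x i)) ⁻¹' (Set.pi Set.univ s)
      = Set.pi Set.univ (fun i => Prod.mk (y i) ⁻¹' s i) := by
    ext x
    simp [Set.mem_pi]
  rw [hpre, Measure.pi_pi]
  refine Finset.prod_congr rfl fun i _ => ?_
  show _ = (Measure.dirac (y i)).prod (ν i) (s i)
  rw [Measure.dirac_prod, Measure.map_apply measurable_prodMk_left (hs i)]

section CondVarLemmas
variable {S A : Type} [Fintype S] [Fintype A]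

lemma integrable_of_bounded01 (μ : Measure ℝ) [IsProbabilityMeasure μ]
    (h0 : μ ((Set.Icc (0:ℝ) 1)ᶜ) = 0) {g : ℝ → ℝ} (hg : Measurable g)
    (hb : ∀ y ∈ Set.Icc (0:ℝ) 1, |g y| ≤ 1) : Integrable g μ := by
  refine Integrable.mono' (integrable_const 1) hg.aestronglyMeasurable ?_
  filter_upwards [ae_Icc μ h0] with y hy
  rw [Real.norm_eq_abs]
  exact hb y hy

lemma condVar_eq (H : ℕ) (P : ℕ → S → A → S → ℝ) (R : ℕ → S → A → Measure ℝ)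
    (pol : ℕ → S → A → ℝ) (hP : IsKernel P) (hR : IsRewardDist R) (t : ℕ) (s : S) (a : A) :
    condVar H P R pol t s a
      = ((∫ y, y^2 ∂(R t s a)) - (rbar R t s a)^2) + varPP H P (rbar R) pol t s a := by
  haveI : IsProbabilityMeasure (R t s a) := (hR t s a).1
  have hid : Integrable (fun y : ℝ => y) (R t s a) :=
    integrable_of_bounded01 _ (hR t s a).2 measurable_id
      (fun y hy => abs_le.mpr ⟨by linarith [hy.1], hy.2⟩)
  have hsq : Integrable (fun y : ℝ => y^2) (R t s a) := by
    refine integrable_of_bounded01 _ (hR t s a).2 (measurable_id.pow_const 2)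
      (fun y hy => ?_)
    rw [abs_pow]
    calc |y|^2 ≤ 1^2 :=
          pow_le_pow_left₀ (abs_nonneg _) (abs_le.mpr ⟨by linarith [hy.1], hy.2⟩) 2
      _ = 1 := one_pow 2
  have hint : ∀ V : ℝ, ∫ y, (V + y)^2 ∂(R t s a)
      = V^2 + 2*V*(rbar R t s a) + ∫ y, y^2 ∂(R t s a) := by
    intro V
    have hexp : (fun y : ℝ => (V + y)^2) = fun y => (V^2 + (2*V)*y) + y^2 := by
      funext y; ring
    rw [hexp, integral_add (f := fun y : ℝ => V^2 + (2*V)*y) (g := fun y : ℝ => y^2)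
        ((integrable_const _).add (hid.const_mul (2*V))) hsq,
      integral_add (f := fun _ : ℝ => V^2) (g := fun y : ℝ => (2*V)*y)
        (integrable_const _) (hid.const_mul (2*V)), integral_const,
      integral_const_mul]
    simp [rbar, measure_univ]
  unfold condVar
  simp_rw [hint]
  have hsplit : ∀ s' : S, P t s a s' *
      ((valueV H P (rbar R) pol (t+1) s')^2
        + 2*(valueV H P (rbar R) pol (t+1) s')*(rbar R t s a) + ∫ y, y^2 ∂(R t s a))
    = P t s a s' * (valueV H P (rbar R) pol (t+1) s')^2
      + (2*(rbar R t s a)) * (P t s a s' * valueV H P (rbar R) pol (t+1) s')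
      + (∫ y, y^2 ∂(R t s a)) * P t s a s' := by
    intro s'; ring
  simp_rw [hsplit]
  rw [Finset.sum_add_distrib, Finset.sum_add_distrib, ← Finset.mul_sum, ← Finset.mul_sum,
    hP.2 t s a, mul_one]
  unfold qval varPP
  ring

lemma trajWeight_nonneg (H : ℕ) (hH : 0 < H) (P : ℕ → S → A → S → ℝ)
    (pol : ℕ → S → A → ℝ) (d1 : S → ℝ) (hP : IsKernel P) (hpol : IsPolicy pol)
    (hd1 : IsDist d1) (p : Fin H → S × A) : 0 ≤ trajWeight H hH P pol d1 p := by
  refine mul_nonneg (hd1.1 _) (Finset.prod_nonneg fun h _ => mul_nonneg (hpol.1 _ _ _) ?_)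
  by_cases hc : (h : ℕ) + 1 < H
  · rw [dif_pos hc]; exact hP.1 _ _ _ _
  · rw [dif_neg hc]; exact zero_le_one

end CondVarLemmas
/-- For any policy `π` in a finite-horizon tabular MDP with
rewards in `[0,1]`, the variance of the Monte Carlo return is at least the
semiparametric efficiency term:
`Var_π[Σ_t r_t] ≥ Σ_t E_π[ Var[V^π_{t+1}(s_{t+1}) + r_t | s_t, a_t] ]`. -/
theorem mdp_return_variance_ge_efficiency_term {S A : Type} [Fintype S] [Fintype A]
    [Nonempty S] [Nonempty A]
    [MeasurableSpace S] [MeasurableSingletonClass S]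
    [MeasurableSpace A] [MeasurableSingletonClass A]
    (H : ℕ) (hH : 0 < H)
    (P : ℕ → S → A → S → ℝ) (R : ℕ → S → A → Measure ℝ)
    (π : ℕ → S → A → ℝ) (d1 : S → ℝ)
    (hP : IsKernel P) (hR : IsRewardDist R) (hπ : IsPolicy π) (hd1 : IsDist d1) :
    ∑ t ∈ Finset.range H, ∑ s : S, ∑ a : A, occSA P π d1 t s a * condVar H P R π t s a
      ≤ (∫ ω, (∑ h : Fin H, (ω h).2) ^ 2 ∂(trajMeasure H hH P R π d1))
          - (∫ ω, (∑ h : Fin H, (ω h).2) ∂(trajMeasure H hH P R π d1)) ^ 2 := by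
  classical
  have hprob : ∀ (t : ℕ) (s : S) (a : A), IsProbabilityMeasure (R t s a) :=
    fun t s a => (hR t s a).1
  have hsupp : ∀ (t : ℕ) (s : S) (a : A), R t s a ((Set.Icc (0:ℝ) 1)ᶜ) = 0 :=
    fun t s a => (hR t s a).2
  have hw0 : ∀ p : Fin H → S×A, 0 ≤ trajWeight H hH P π d1 p :=
    fun p => trajWeight_nonneg H hH P π d1 hP hπ hd1 p
  have hφm : ∀ p : Fin H → S × A,
      Measurable (fun (x : Fin H → ℝ) (h : Fin H) => (p h, x h)) :=
    fun p => measurable_pi_lambda _ fun h => measurable_const.prodMk (measurable_pi_apply h)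
  have hf1m : Measurable (fun ω : Fin H → (S×A)×ℝ => ∑ h : Fin H, (ω h).2) :=
    Finset.measurable_sum _ fun h _ => measurable_snd.comp (measurable_pi_apply h)
  have hf2m : Measurable (fun ω : Fin H → (S×A)×ℝ => (∑ h : Fin H, (ω h).2)^2) :=
    hf1m.pow_const 2
  have hmeas : trajMeasure H hH P R π d1
      = ∑ p : Fin H → S×A, ENNReal.ofReal (trajWeight H hH P π d1 p) •
          ((Measure.pi fun h : Fin H => R h (p h).1 (p h).2).map
            (fun (x : Fin H → ℝ) (h : Fin H) => (p h, x h))) := by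
    unfold trajMeasure
    refine Finset.sum_congr rfl fun p _ => ?_
    haveI : ∀ h : Fin H, IsProbabilityMeasure (R h (p h).1 (p h).2) := fun h => hprob _ _ _
    rw [pi_dirac_prod]
  have key1 : (∫ ω, (∑ h : Fin H, (ω h).2) ∂(trajMeasure H hH P R π d1))
      = ∑ p : Fin H → S×A, trajWeight H hH P π d1 p *
          (∑ h : Fin H, rbar R (h:ℕ) (p h).1 (p h).2) := by
    rw [hmeas]
    have hint : ∀ p : Fin H → S×A, Integrable (fun ω : Fin H → (S×A)×ℝ => ∑ h : Fin H, (ω h).2)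
        ((Measure.pi fun h : Fin H => R h (p h).1 (p h).2).map
          (fun (x : Fin H → ℝ) (h : Fin H) => (p h, x h))) := by
      intro p
      haveI : ∀ h : Fin H, IsProbabilityMeasure (R h (p h).1 (p h).2) := fun h => hprob _ _ _
      rw [integrable_map_measure hf1m.aestronglyMeasurable (hφm p).aemeasurable]
      exact integrable_sum_coord _ (fun h => hsupp _ _ _)
    rw [integral_finset_sum_measure (fun p _ => (hint p).smul_measure ENNReal.ofReal_ne_top)]
    refine Finset.sum_congr rfl fun p _ => ?_
    haveI : ∀ h : Fin H, IsProbabilityMeasure (R h (p h).1 (p h).2) := fun h => hprob _ _ _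
    rw [integral_smul_measure, ENNReal.toReal_ofReal (hw0 p),
      integral_map (hφm p).aemeasurable hf1m.aestronglyMeasurable]
    rw [smul_eq_mul]
    congr 1
    show (∫ x : Fin H → ℝ, (∑ h : Fin H, x h)
        ∂(Measure.pi fun h : Fin H => R h (p h).1 (p h).2)) = _
    rw [integral_pi_sum _ (fun h => hsupp _ _ _)]
    rfl
  have key2 : (∫ ω, (∑ h : Fin H, (ω h).2)^2 ∂(trajMeasure H hH P R π d1))
      = ∑ p : Fin H → S×A, trajWeight H hH P π d1 p *
          ((∑ h : Fin H, rbar R (h:ℕ) (p h).1 (p h).2)^2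
            + ∑ h : Fin H, ((∫ y, y^2 ∂(R (h:ℕ) (p h).1 (p h).2))
                - (rbar R (h:ℕ) (p h).1 (p h).2)^2)) := by
    rw [hmeas]
    have hint : ∀ p : Fin H → S×A,
        Integrable (fun ω : Fin H → (S×A)×ℝ => (∑ h : Fin H, (ω h).2)^2)
        ((Measure.pi fun h : Fin H => R h (p h).1 (p h).2).map
          (fun (x : Fin H → ℝ) (h : Fin H) => (p h, x h))) := by
      intro p
      haveI : ∀ h : Fin H, IsProbabilityMeasure (R h (p h).1 (p h).2) := fun h => hprob _ _ _
      rw [integrable_map_measure hf2m.aestronglyMeasurable (hφm p).aemeasurable]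
      exact integrable_sum_coord_sq _ (fun h => hsupp _ _ _)
    rw [integral_finset_sum_measure (fun p _ => (hint p).smul_measure ENNReal.ofReal_ne_top)]
    refine Finset.sum_congr rfl fun p _ => ?_
    haveI : ∀ h : Fin H, IsProbabilityMeasure (R h (p h).1 (p h).2) := fun h => hprob _ _ _
    rw [integral_smul_measure, ENNReal.toReal_ofReal (hw0 p),
      integral_map (hφm p).aemeasurable hf2m.aestronglyMeasurable]
    rw [smul_eq_mul]
    congr 1
    show (∫ x : Fin H → ℝ, (∑ h : Fin H, x h)^2
        ∂(Measure.pi fun h : Fin H => R h (p h).1 (p h).2)) = _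
    rw [integral_pi_sum_sq _ (fun h => hsupp _ _ _)]
    rfl
  have hwm : ∀ p : Fin H → S×A, trajWeight H hH P π d1 p = myW H P π d1 p :=
    fun p => trajWeight_eq_myW H hH P π d1 p
  have hcore := core_ineq H P (rbar R)
    (fun t s a => (∫ y, y^2 ∂(R t s a)) - (rbar R t s a)^2) π d1 hP hπ hd1
  beta_reduce at hcore
  have hmean : ∑ p : Fin H → S×A, trajWeight H hH P π d1 p *
      (∑ h : Fin H, rbar R (h:ℕ) (p h).1 (p h).2)
      = ∑ s : S, d1 s * valueV H P (rbar R) π 0 s := by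
    simp_rw [hwm]
    exact myW_mean H P (rbar R) π d1 hP hπ hd1
  have hjen : (∑ s : S, d1 s * valueV H P (rbar R) π 0 s)^2
      ≤ ∑ s : S, d1 s * (valueV H P (rbar R) π 0 s)^2 :=
    sq_sum_le_sum_sq d1 _ hd1.1 hd1.2
  have hcond : ∀ (t : ℕ) (s : S) (a : A), condVar H P R π t s a
      = ((∫ y, y^2 ∂(R t s a)) - (rbar R t s a)^2) + varPP H P (rbar R) π t s a :=
    fun t s a => condVar_eq H P R π hP hR t s a
  simp_rw [hcond]
  rw [key1, key2, hmean]
  simp_rw [hwm]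
  linarith [hcore, hjen]
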